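/- Let X be a positive random variable with continuous distribution function, E[X] = 1 and σ² = E[X²] < ∞. Let π⁰, π¹, γ, λ > 0 and 0 < P < λ, set ρ̂ = 1/π¹ + 1/(γσ²), and assume λρ̂ < π⁰/π¹. Then the expected market wealth π⁰q − (π¹/2)q² − (γσ²/2)((1−e^{−a})q)² − δP − λE[(e^{−a}qX − δ)⁺], maximized over (q, a, δ), is attained at q* = π⁰/π¹ − P·ES_{P/λ}(X)/π¹, e^{−a*} = (π⁰/π¹ − P·ES_{P/λ}(X)·ρ̂)/q*, δ* = VaR_{P/λ}(X)·(π⁰/π¹ − P·ES_{P/λ}(X)·ρ̂), the optimal expected emissions are e^{−a*}q* = π⁰/π¹ − P·ES_{P/λ}(X)·ρ̂, and the maximal expected wealth is (π⁰)²/(2π¹) − P·ES_{P/λ}(X)·(π⁰/π¹ − (P·ES_{P/λ}(X)/2)·ρ̂). In particular, the market problem with price P is equivalent to the tax problem with rate τ = P·ES_{P/λ}(X): the latter's objective π⁰q − (π¹/2)q² − (γσ²/2)((1−e^{−a})q)² − τe^{−a}q has the same optimal (q*, a*), expected emissions π⁰/π¹ − τρ̂, and maximal value (π⁰)²/(2π¹)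 − τ(π⁰/π¹ − (τ/2)ρ̂). -/

import Mathlib

open MeasureTheory Real

/-- Value-at-risk at level `ε`: `VaR_ε(X) = inf {y | ℙ[X ≤ y] ≥ 1 − ε}`. -/
noncomputable def VaR {Ω : Type*} [MeasurableSpace Ω] (μ : Measure Ω)
    (X : Ω → ℝ) (ε : ℝ) : ℝ :=
  sInf {y : ℝ | 1 - ε ≤ (μ {ω | X ω ≤ y}).toReal}

/-- Expected shortfall at level `ε`: `ES_ε(X) = (1/ε)∫₀^ε VaR_u(X) du`. -/
noncomputable def ES {Ω : Type*} [MeasurableSpace Ω] (μ : Measure Ω)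
    (X : Ω → ℝ) (ε : ℝ) : ℝ :=
  (1 / ε) * ∫ u in (0 : ℝ)..ε, VaR μ X u

open Set Filter Topology

section Aux

variable {Ω : Type*} [MeasurableSpace Ω] (μ : Measure Ω) [IsProbabilityMeasure μ]
  (X : Ω → ℝ)

lemma F_mono : Monotone (fun y : ℝ => (μ {ω | X ω ≤ y}).toReal) := by
  intro a b hab
  exact ENNReal.toReal_mono (measure_ne_top μ _)
    (measure_mono (fun ω h => le_trans h hab))

lemma F_zero_of_neg (hXpos : ∀ᵐ ω ∂μ, 0 < X ω) {y : ℝ} (hy : y < 0) :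
    (μ {ω | X ω ≤ y}).toReal = 0 := by
  have h0 : μ {ω | ¬ (0 < X ω)} = 0 := ae_iff.mp hXpos
  have : μ {ω | X ω ≤ y} = 0 :=
    measure_mono_null (fun ω h => by simp only [Set.mem_setOf_eq, not_lt]
                                     exact le_of_lt (lt_of_le_of_lt h hy)) h0
  simp [this]

lemma S_nonempty (hXmeas : Measurable X) {u : ℝ} (hu0 : 0 < u) :
    {y : ℝ | 1 - u ≤ (μ {ω | X ω ≤ y}).toReal}.Nonempty := by
  have hmono : Monotone (fun n : ℕ => {ω | X ω ≤ (n : ℝ)}) := by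
    intro m n hmn ω h
    simp only [Set.mem_setOf_eq] at h ⊢
    exact le_trans h (by exact_mod_cast hmn)
  have hUnion : (⋃ n : ℕ, {ω | X ω ≤ (n : ℝ)}) = Set.univ := by
    ext ω
    simp only [Set.mem_iUnion, Set.mem_setOf_eq, Set.mem_univ, iff_true]
    exact exists_nat_ge (X ω)
  have htend : Tendsto (fun n : ℕ => μ {ω | X ω ≤ (n : ℝ)}) atTop (𝓝 (μ Set.univ)) := by
    simpa [hUnion, Function.comp_def] using tendsto_measure_iUnion_atTop (μ := μ) hmono
  have htendR : Tendsto (fun n : ℕ => (μ {ω | X ω ≤ (n : ℝ)}).toReal) atTop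
      (𝓝 (μ Set.univ).toReal) :=
    (ENNReal.tendsto_toReal (measure_ne_top μ _)).comp htend
  have h1 : (μ (Set.univ : Set Ω)).toReal = 1 := by simp
  rw [h1] at htendR
  have : ∀ᶠ n : ℕ in atTop, 1 - u ≤ (μ {ω | X ω ≤ (n : ℝ)}).toReal :=
    htendR.eventually_const_le (by linarith)
  obtain ⟨n, hn⟩ := this.exists
  exact ⟨n, hn⟩

lemma S_bddBelow (hXpos : ∀ᵐ ω ∂μ, 0 < X ω) {u : ℝ} (hu1 : u < 1) :
    BddBelow {y : ℝ | 1 - u ≤ (μ {ω | X ω ≤ y}).toReal} := by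
  refine ⟨0, fun y hy => ?_⟩
  by_contra h
  push_neg at h
  have := F_zero_of_neg μ X hXpos h
  simp only [Set.mem_setOf_eq, this] at hy
  linarith

lemma VaR_le_iff (hXmeas : Measurable X) (hXpos : ∀ᵐ ω ∂μ, 0 < X ω)
    (hcont : Continuous fun y : ℝ => (μ {ω | X ω ≤ y}).toReal)
    {u y : ℝ} (hu0 : 0 < u) (hu1 : u < 1) :
    VaR μ X u ≤ y ↔ 1 - u ≤ (μ {ω | X ω ≤ y}).toReal := by
  have hne := S_nonempty μ X hXmeas hu0
  have hbdd := S_bddBelow μ X hXpos hu1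
  constructor
  · intro h
    have hclosed : IsClosed {y : ℝ | 1 - u ≤ (μ {ω | X ω ≤ y}).toReal} :=
      isClosed_Ici.preimage hcont
    have hmem := hclosed.csInf_mem hne hbdd
    exact le_trans hmem (F_mono μ X h)
  · intro h
    exact csInf_le hbdd h

lemma VaR_gt_iff (hXmeas : Measurable X) (hXpos : ∀ᵐ ω ∂μ, 0 < X ω)
    (hcont : Continuous fun y : ℝ => (μ {ω | X ω ≤ y}).toReal)
    {u y : ℝ} (hu : u ∈ Set.Ioo (0:ℝ) 1) :
    y < VaR μ X u ↔ u < 1 - (μ {ω | X ω ≤ y}).toReal := by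
  rw [← not_le, VaR_le_iff μ X hXmeas hXpos hcont hu.1 hu.2, not_le]
  constructor <;> intro h <;> linarith

lemma VaR_nonneg (hXmeas : Measurable X) (hXpos : ∀ᵐ ω ∂μ, 0 < X ω)
    (hcont : Continuous fun y : ℝ => (μ {ω | X ω ≤ y}).toReal)
    {u : ℝ} (hu0 : 0 < u) (hu1 : u < 1) : 0 ≤ VaR μ X u := by
  by_contra h
  push_neg at h
  have h1 : 1 - u ≤ (μ {ω | X ω ≤ VaR μ X u}).toReal :=
    (VaR_le_iff μ X hXmeas hXpos hcont hu0 hu1).mp le_rfl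
  rw [F_zero_of_neg μ X hXpos h] at h1
  linarith

lemma VaR_antitone (hXmeas : Measurable X) (hXpos : ∀ᵐ ω ∂μ, 0 < X ω)
    (hcont : Continuous fun y : ℝ => (μ {ω | X ω ≤ y}).toReal)
    {u u' : ℝ} (hu0 : 0 < u) (huu' : u ≤ u') (hu1 : u' < 1) :
    VaR μ X u' ≤ VaR μ X u := by
  rw [VaR_le_iff μ X hXmeas hXpos hcont (lt_of_lt_of_le hu0 huu') hu1]
  have h1 : 1 - u ≤ (μ {ω | X ω ≤ VaR μ X u}).toReal :=
    (VaR_le_iff μ X hXmeas hXpos hcont hu0 (lt_of_le_of_lt huu' hu1)).mp le_rfl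
  linarith



lemma VaR_if_meas (hXmeas : Measurable X) (hXpos : ∀ᵐ ω ∂μ, 0 < X ω)
    (hcont : Continuous fun y : ℝ => (μ {ω | X ω ≤ y}).toReal)
    (hgt : ∀ {u y : ℝ}, u ∈ Set.Ioo (0:ℝ) 1 →
      (y < VaR μ X u ↔ u < 1 - (μ {ω | X ω ≤ y}).toReal)) :
    Measurable (fun u : ℝ => if u ∈ Set.Ioo (0:ℝ) 1 then VaR μ X u else 0) := by
  apply measurable_of_Ioi
  intro y
  by_cases hy : y < 0
  · have hset : (fun u : ℝ => if u ∈ Set.Ioo (0:ℝ) 1 then VaR μ X u else 0) ⁻¹' Set.Ioi y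
        = (Set.Iio (1 - (μ {ω | X ω ≤ y}).toReal) ∩ Set.Ioo 0 1) ∪ (Set.Ioo (0:ℝ) 1)ᶜ := by
      ext u
      by_cases hu : u ∈ Set.Ioo (0:ℝ) 1
      · simp only [Set.mem_preimage, Set.mem_Ioi, if_pos hu, if_true, if_false, Set.mem_union, Set.mem_inter_iff,
          Set.mem_Iio, Set.mem_compl_iff, hu, not_true_eq_false, or_false, and_true]
        rw [hgt hu]
      · simp only [Set.mem_preimage, Set.mem_Ioi, if_neg hu, if_true, if_false, Set.mem_union, Set.mem_compl_iff, hu,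
          not_false_eq_true, or_true, iff_true]
        exact hy
    rw [hset]
    exact (measurableSet_Iio.inter measurableSet_Ioo).union measurableSet_Ioo.compl
  · have hset : (fun u : ℝ => if u ∈ Set.Ioo (0:ℝ) 1 then VaR μ X u else 0) ⁻¹' Set.Ioi y
        = Set.Iio (1 - (μ {ω | X ω ≤ y}).toReal) ∩ Set.Ioo 0 1 := by
      ext u
      by_cases hu : u ∈ Set.Ioo (0:ℝ) 1
      · simp only [Set.mem_preimage, Set.mem_Ioi, if_pos hu, if_true, if_false, Set.mem_inter_iff, Set.mem_Iio, hu,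
          and_true]
        rw [hgt hu]
      · simp only [Set.mem_preimage, Set.mem_Ioi, if_neg hu, if_true, if_false, Set.mem_inter_iff, hu, and_false,
          iff_false, not_lt]
        linarith
    rw [hset]
    exact measurableSet_Iio.inter measurableSet_Ioo


lemma VaR_quantile_lintegral (hXmeas : Measurable X) (hXpos : ∀ᵐ ω ∂μ, 0 < X ω)
    (hcont : Continuous fun y : ℝ => (μ {ω | X ω ≤ y}).toReal) (c : ℝ) :
    ∫⁻ u in Set.Ioo (0:ℝ) 1, ENNReal.ofReal (max (VaR μ X u - c) 0)
      = ∫⁻ ω, ENNReal.ofReal (max (X ω - c) 0) ∂μ := by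
  have hgt : ∀ {u y : ℝ}, u ∈ Set.Ioo (0:ℝ) 1 →
      (y < VaR μ X u ↔ u < 1 - (μ {ω | X ω ≤ y}).toReal) :=
    fun hu => VaR_gt_iff μ X hXmeas hXpos hcont hu
  have hifmeas := VaR_if_meas μ X hXmeas hXpos hcont (fun hu => hgt hu)
  have hm0 : Measurable fun u : ℝ =>
      max ((if u ∈ Set.Ioo (0:ℝ) 1 then VaR μ X u else 0) - c) 0 :=
    (hifmeas.sub measurable_const).max measurable_const
  have haemeas : AEMeasurable (fun u => max (VaR μ X u - c) 0)
      (volume.restrict (Set.Ioo (0:ℝ) 1)) := by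
    refine hm0.aemeasurable.congr ?_
    filter_upwards [ae_restrict_mem measurableSet_Ioo] with u hu
    rw [if_pos hu]
  have hm1 : Measurable fun ω => max (X ω - c) 0 :=
    (hXmeas.sub measurable_const).max measurable_const
  have L1 := lintegral_eq_lintegral_meas_lt (volume.restrict (Set.Ioo (0:ℝ) 1))
    (f := fun u => max (VaR μ X u - c) 0) (ae_of_all _ fun u => le_max_right _ _) haemeas
  have L2 := lintegral_eq_lintegral_meas_lt μ
    (f := fun ω => max (X ω - c) 0) (ae_of_all _ fun ω => le_max_right _ _) hm1.aemeasurable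
  rw [L1, L2]
  refine setLIntegral_congr_fun measurableSet_Ioi (fun t ht => ?_)
  have ht0 : (0:ℝ) < t := ht
  have hFnn : 0 ≤ (μ {ω | X ω ≤ c + t}).toReal := ENNReal.toReal_nonneg
  have hFle : (μ {ω | X ω ≤ c + t}).toReal ≤ 1 := by
    rw [show (1:ℝ) = (μ (Set.univ : Set Ω)).toReal by simp]
    exact ENNReal.toReal_mono (measure_ne_top μ _) (measure_mono (Set.subset_univ _))
  have h1 : {u | t < max (VaR μ X u - c) 0} = {u | c + t < VaR μ X u} := by
    ext u
    simp only [Set.mem_setOf_eq, lt_max_iff]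
    constructor
    · rintro (h | h) <;> linarith
    · intro h; left; linarith
  have h2 : {ω | t < max (X ω - c) 0} = {ω | X ω ≤ c + t}ᶜ := by
    ext ω
    simp only [Set.mem_setOf_eq, lt_max_iff, Set.mem_compl_iff, Set.mem_setOf_eq, not_le]
    constructor
    · rintro (h | h) <;> linarith
    · intro h; left; linarith
  rw [h1, h2, Measure.restrict_apply' measurableSet_Ioo]
  have h3 : {u | c + t < VaR μ X u} ∩ Set.Ioo 0 1
      = Set.Ioo (0:ℝ) (1 - (μ {ω | X ω ≤ c + t}).toReal) ∩ Set.Ioo 0 1 := by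
    ext u
    simp only [Set.mem_inter_iff, Set.mem_setOf_eq, Set.mem_Ioo]
    constructor
    · rintro ⟨h, hu⟩
      exact ⟨⟨hu.1, (hgt ⟨hu.1, hu.2⟩).mp h⟩, hu⟩
    · rintro ⟨h, hu⟩
      exact ⟨(hgt hu).mpr h.2, hu⟩
  have h5 : ENNReal.ofReal (1 - (μ {ω | X ω ≤ c + t}).toReal) = 1 - μ {ω | X ω ≤ c + t} := by
    rw [ENNReal.ofReal_sub _ ENNReal.toReal_nonneg, ENNReal.ofReal_one,
      ENNReal.ofReal_toReal (measure_ne_top _ _)]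
  rw [h3, Set.Ioo_inter_Ioo, Real.volume_Ioo, max_self, sub_zero,
    min_eq_left (by linarith : 1 - (μ {ω | X ω ≤ c + t}).toReal ≤ 1), h5,
    prob_compl_eq_one_sub (show MeasurableSet {ω | X ω ≤ c + t} from hXmeas measurableSet_Iic)]

lemma VaR_aemeas (hXmeas : Measurable X) (hXpos : ∀ᵐ ω ∂μ, 0 < X ω)
    (hcont : Continuous fun y : ℝ => (μ {ω | X ω ≤ y}).toReal) (c : ℝ) :
    AEMeasurable (fun u => max (VaR μ X u - c) 0)
      (volume.restrict (Set.Ioo (0:ℝ) 1)) := by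
  have hifmeas := VaR_if_meas μ X hXmeas hXpos hcont
    (fun hu => VaR_gt_iff μ X hXmeas hXpos hcont hu)
  have hm0 : Measurable fun u : ℝ =>
      max ((if u ∈ Set.Ioo (0:ℝ) 1 then VaR μ X u else 0) - c) 0 :=
    (hifmeas.sub measurable_const).max measurable_const
  refine hm0.aemeasurable.congr ?_
  filter_upwards [ae_restrict_mem measurableSet_Ioo] with u hu
  rw [if_pos hu]

lemma quantile_rep (hXmeas : Measurable X) (hXint : Integrable X μ)
    (hXpos : ∀ᵐ ω ∂μ, 0 < X ω)
    (hcont : Continuous fun y : ℝ => (μ {ω | X ω ≤ y}).toReal) (c : ℝ) :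
    IntegrableOn (fun u => max (VaR μ X u - c) 0) (Set.Ioo (0:ℝ) 1) ∧
    ∫ u in Set.Ioo (0:ℝ) 1, max (VaR μ X u - c) 0 = ∫ ω, max (X ω - c) 0 ∂μ := by
  have hXc : Integrable (fun ω => max (X ω - c) 0) μ :=
    (hXint.sub (integrable_const c)).pos_part
  have hnn : 0 ≤ᵐ[μ] fun ω => max (X ω - c) 0 := ae_of_all _ fun ω => le_max_right _ _
  have hnn' : 0 ≤ᵐ[volume.restrict (Set.Ioo (0:ℝ) 1)] fun u => max (VaR μ X u - c) 0 :=
    ae_of_all _ fun u => le_max_right _ _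
  have hL := VaR_quantile_lintegral μ X hXmeas hXpos hcont c
  have hRof : ∫⁻ ω, ENNReal.ofReal (max (X ω - c) 0) ∂μ
      = ENNReal.ofReal (∫ ω, max (X ω - c) 0 ∂μ) :=
    (ofReal_integral_eq_lintegral_ofReal hXc hnn).symm
  have haemeas := VaR_aemeas μ X hXmeas hXpos hcont c
  have hint : IntegrableOn (fun u => max (VaR μ X u - c) 0) (Set.Ioo (0:ℝ) 1) := by
    rw [IntegrableOn, Integrable, hasFiniteIntegral_iff_ofReal hnn']
    exact ⟨haemeas.aestronglyMeasurable, by rw [hL, hRof]; exact ENNReal.ofReal_lt_top⟩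
  refine ⟨hint, ?_⟩
  rw [integral_eq_lintegral_of_nonneg_ae hnn' haemeas.aestronglyMeasurable, hL, hRof]
  exact ENNReal.toReal_ofReal (integral_nonneg fun ω => le_max_right _ _)

lemma VaR_rep (hXmeas : Measurable X) (hXint : Integrable X μ)
    (hXpos : ∀ᵐ ω ∂μ, 0 < X ω)
    (hcont : Continuous fun y : ℝ => (μ {ω | X ω ≤ y}).toReal) :
    IntegrableOn (fun u => VaR μ X u) (Set.Ioo (0:ℝ) 1) ∧
    ∫ u in Set.Ioo (0:ℝ) 1, VaR μ X u = ∫ ω, X ω ∂μ := by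
  obtain ⟨h1, h2⟩ := quantile_rep μ X hXmeas hXint hXpos hcont 0
  have he : (fun u => max (VaR μ X u - 0) 0)
      =ᵐ[volume.restrict (Set.Ioo (0:ℝ) 1)] fun u => VaR μ X u := by
    filter_upwards [ae_restrict_mem measurableSet_Ioo] with u hu
    rw [sub_zero, max_eq_left (VaR_nonneg μ X hXmeas hXpos hcont hu.1 hu.2)]
  have he2 : (fun ω => max (X ω - 0) 0) =ᵐ[μ] X := by
    filter_upwards [hXpos] with ω hω
    rw [sub_zero, max_eq_left hω.le]
  exact ⟨h1.congr he, by rw [← integral_congr_ae he, h2, integral_congr_ae he2]⟩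


lemma ES_facts (hXmeas : Measurable X) (hXint : Integrable X μ)
    (hXpos : ∀ᵐ ω ∂μ, 0 < X ω)
    (hcont : Continuous fun y : ℝ => (μ {ω | X ω ≤ y}).toReal)
    {ε : ℝ} (hε0 : 0 < ε) (hε1 : ε < 1) :
    (∀ c : ℝ, ε * ES μ X ε ≤ c * ε + ∫ ω, max (X ω - c) 0 ∂μ) ∧
    (VaR μ X ε * ε + ∫ ω, max (X ω - VaR μ X ε) 0 ∂μ = ε * ES μ X ε) ∧
    0 ≤ ES μ X ε ∧ ε * ES μ X ε ≤ ∫ ω, X ω ∂μ ∧ (∫ ω, X ω ∂μ) ≤ ES μ X ε := by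
  obtain ⟨hVint, hVeq⟩ := VaR_rep μ X hXmeas hXint hXpos hcont
  have hIoc_sub : Set.Ioc (0:ℝ) ε ⊆ Set.Ioo (0:ℝ) 1 :=
    fun u hu => ⟨hu.1, lt_of_le_of_lt hu.2 hε1⟩
  have hIocInt : IntegrableOn (fun u => VaR μ X u) (Set.Ioc (0:ℝ) ε) :=
    hVint.mono_set hIoc_sub
  have hConstInt : ∀ c : ℝ, IntegrableOn (fun _ : ℝ => c) (Set.Ioc (0:ℝ) ε) :=
    fun c => integrableOn_const measure_Ioc_lt_top.ne
  have hESdef : ε * ES μ X ε = ∫ u in Set.Ioc (0:ℝ) ε, VaR μ X u := by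
    rw [ES, intervalIntegral.integral_of_le hε0.le]
    field_simp
  have hvol : (volume (Set.Ioc (0:ℝ) ε)).toReal = ε := by
    rw [Real.volume_Ioc, sub_zero, ENNReal.toReal_ofReal hε0.le]
  have hconst : ∀ c : ℝ, ∫ _ in Set.Ioc (0:ℝ) ε, c = ε * c := by
    intro c
    rw [setIntegral_const, measureReal_def, hvol, smul_eq_mul]
  have hnnIoo : 0 ≤ᵐ[volume.restrict (Set.Ioo (0:ℝ) 1)] fun u => VaR μ X u := by
    filter_upwards [ae_restrict_mem measurableSet_Ioo] with u hu
    exact VaR_nonneg μ X hXmeas hXpos hcont hu.1 hu.2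
  have key : ∀ c : ℝ, ε * ES μ X ε ≤ c * ε + ∫ ω, max (X ω - c) 0 ∂μ := by
    intro c
    obtain ⟨hQint, hQeq⟩ := quantile_rep μ X hXmeas hXint hXpos hcont c
    have h1 : ∫ u in Set.Ioc (0:ℝ) ε, max (VaR μ X u - c) 0
        ≤ ∫ u in Set.Ioo (0:ℝ) 1, max (VaR μ X u - c) 0 :=
      setIntegral_mono_set hQint (ae_of_all _ fun u => le_max_right _ _)
        (HasSubset.Subset.eventuallyLE hIoc_sub)
    have h2 : ∫ u in Set.Ioc (0:ℝ) ε, (VaR μ X u - c)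
        ≤ ∫ u in Set.Ioc (0:ℝ) ε, max (VaR μ X u - c) 0 :=
      integral_mono (hIocInt.sub (hConstInt c)) (hQint.mono_set hIoc_sub)
        (fun u => le_max_left _ _)
    have h3 : ∫ u in Set.Ioc (0:ℝ) ε, (VaR μ X u - c)
        = (∫ u in Set.Ioc (0:ℝ) ε, VaR μ X u) - ε * c := by
      rw [integral_sub hIocInt (hConstInt c), hconst c]
    rw [hESdef]
    rw [h3] at h2
    rw [hQeq] at h1
    linarith
  refine ⟨key, ?_, ?_, ?_, ?_⟩
  · set v := VaR μ X ε with hv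
    obtain ⟨hQint, hQeq⟩ := quantile_rep μ X hXmeas hXint hXpos hcont v
    have hdisj : Disjoint (Set.Ioc (0:ℝ) ε) (Set.Ioo ε 1) :=
      Set.disjoint_left.mpr fun u h1 h2 => absurd h2.1 (not_lt.mpr h1.2)
    have hun : Set.Ioc (0:ℝ) ε ∪ Set.Ioo ε 1 = Set.Ioo (0:ℝ) 1 :=
      Set.Ioc_union_Ioo_eq_Ioo hε0.le hε1
    have hsplit : ∫ u in Set.Ioo (0:ℝ) 1, max (VaR μ X u - v) 0
        = (∫ u in Set.Ioc (0:ℝ) ε, max (VaR μ X u - v) 0)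
          + ∫ u in Set.Ioo ε 1, max (VaR μ X u - v) 0 := by
      rw [← setIntegral_union hdisj measurableSet_Ioo
        (hQint.mono_set (hun ▸ Set.subset_union_left))
        (hQint.mono_set (hun ▸ Set.subset_union_right)), hun]
    have hzero : ∫ u in Set.Ioo ε 1, max (VaR μ X u - v) 0 = 0 := by
      refine integral_eq_zero_of_ae ?_
      filter_upwards [ae_restrict_mem measurableSet_Ioo] with u hu
      have : VaR μ X u ≤ v := VaR_antitone μ X hXmeas hXpos hcont hε0 hu.1.le hu.2
      simp only [Pi.zero_apply]
      exact max_eq_right (by linarith)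
    have hfirst : ∫ u in Set.Ioc (0:ℝ) ε, max (VaR μ X u - v) 0
        = ∫ u in Set.Ioc (0:ℝ) ε, (VaR μ X u - v) := by
      refine integral_congr_ae ?_
      filter_upwards [ae_restrict_mem measurableSet_Ioc] with u hu
      have : v ≤ VaR μ X u := VaR_antitone μ X hXmeas hXpos hcont hu.1 hu.2 hε1
      exact max_eq_left (by linarith)
    have h3 : ∫ u in Set.Ioc (0:ℝ) ε, (VaR μ X u - v)
        = (∫ u in Set.Ioc (0:ℝ) ε, VaR μ X u) - ε * v := by
      rw [integral_sub hIocInt (hConstInt v), hconst v]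
    rw [← hQeq, hsplit, hzero, hfirst, h3, hESdef]
    ring
  · have h0 : 0 ≤ ∫ u in Set.Ioc (0:ℝ) ε, VaR μ X u := by
      refine integral_nonneg_of_ae ?_
      filter_upwards [ae_restrict_mem measurableSet_Ioc] with u hu
      exact VaR_nonneg μ X hXmeas hXpos hcont hu.1 (lt_of_le_of_lt hu.2 hε1)
    nlinarith [hESdef]
  · rw [hESdef, ← hVeq]
    exact setIntegral_mono_set hVint hnnIoo (HasSubset.Subset.eventuallyLE hIoc_sub)
  · set v := VaR μ X ε with hv
    have hIoo_sub : Set.Ioo ε 1 ⊆ Set.Ioo (0:ℝ) 1 := fun u hu => ⟨lt_trans hε0 hu.1, hu.2⟩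
    have hdisj : Disjoint (Set.Ioc (0:ℝ) ε) (Set.Ioo ε 1) :=
      Set.disjoint_left.mpr fun u h1 h2 => absurd h2.1 (not_lt.mpr h1.2)
    have hun : Set.Ioc (0:ℝ) ε ∪ Set.Ioo ε 1 = Set.Ioo (0:ℝ) 1 :=
      Set.Ioc_union_Ioo_eq_Ioo hε0.le hε1
    have hsplit : ∫ u in Set.Ioo (0:ℝ) 1, VaR μ X u
        = (∫ u in Set.Ioc (0:ℝ) ε, VaR μ X u) + ∫ u in Set.Ioo ε 1, VaR μ X u := by
      rw [← setIntegral_union hdisj measurableSet_Ioo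
        (hVint.mono_set (hun ▸ Set.subset_union_left))
        (hVint.mono_set (hun ▸ Set.subset_union_right)), hun]
    have hconstIoo : IntegrableOn (fun _ : ℝ => v) (Set.Ioo ε 1) :=
      integrableOn_const measure_Ioo_lt_top.ne
    have hub : ∫ u in Set.Ioo ε 1, VaR μ X u ≤ ∫ _ in Set.Ioo ε 1, v := by
      refine integral_mono_ae (hVint.mono_set hIoo_sub) hconstIoo ?_
      filter_upwards [ae_restrict_mem measurableSet_Ioo] with u hu
      exact VaR_antitone μ X hXmeas hXpos hcont hε0 hu.1.le hu.2
    have hubv : ∫ _ in Set.Ioo ε 1, v = (1 - ε) * v := by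
      rw [setIntegral_const, measureReal_def, Real.volume_Ioo, ENNReal.toReal_ofReal (by linarith), smul_eq_mul]
    have hvleE : v ≤ ES μ X ε := by
      have hlb : (∫ _ in Set.Ioc (0:ℝ) ε, v) ≤ ∫ u in Set.Ioc (0:ℝ) ε, VaR μ X u := by
        refine integral_mono_ae (hConstInt v) hIocInt ?_
        filter_upwards [ae_restrict_mem measurableSet_Ioc] with u hu
        exact VaR_antitone μ X hXmeas hXpos hcont hu.1 hu.2 hε1
      rw [hconst v, ← hESdef] at hlb
      exact le_of_mul_le_mul_left hlb hε0
    have hvnn : 0 ≤ v := VaR_nonneg μ X hXmeas hXpos hcont hε0 hε1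
    have hfact : (1 - ε) * v ≤ (1 - ε) * ES μ X ε :=
      mul_le_mul_of_nonneg_left hvleE (by linarith)
    rw [← hVeq, hsplit, ← hESdef]
    nlinarith [hub, hubv, hfact]

end Aux

set_option maxHeartbeats 1000000 in
/-- With random emissions `X` (positive, `E[X] = 1`,
`σ² = E[X²] < ∞`, continuous distribution function) and `λρ̂ < π⁰/π¹` where
`ρ̂ = 1/π¹ + 1/(γσ²)`, the expected market wealth
`π⁰q − (π¹/2)q² − (γσ²/2)((1−e^{−a})q)² − δP − λE[(e^{−a}qX − δ)⁺]`
is maximized at `q* = π⁰/π¹ − P·ES_{P/λ}(X)/π¹`,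
`e^{−a*} = (π⁰/π¹ − P·ES_{P/λ}(X)ρ̂)/q*`,
`δ* = VaR_{P/λ}(X)(π⁰/π¹ − P·ES_{P/λ}(X)ρ̂)`, with optimal expected emissions
`e^{−a*}q* = π⁰/π¹ − P·ES_{P/λ}(X)ρ̂` and maximal value
`(π⁰)²/(2π¹) − P·ES_{P/λ}(X)(π⁰/π¹ − (P·ES_{P/λ}(X)/2)ρ̂)`; the market
problem is equivalent to the tax problem with rate `τ = P·ES_{P/λ}(X)`. -/
theorem market_scheme_random_emissions_maximizer
    {Ω : Type*} [MeasurableSpace Ω] (μ : Measure Ω) [IsProbabilityMeasure μ]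
    (X : Ω → ℝ) (hXmeas : Measurable X) (hXint : Integrable X μ)
    (hXpos : ∀ᵐ ω ∂μ, 0 < X ω)
    (hEX : ∫ ω, X ω ∂μ = 1)
    (hX2int : Integrable (fun ω => X ω ^ 2) μ)
    (σ2 : ℝ) (hσ2 : σ2 = ∫ ω, X ω ^ 2 ∂μ)
    (hcont : Continuous fun y : ℝ => (μ {ω | X ω ≤ y}).toReal)
    (π0 π1 γ lam P : ℝ) (hπ0 : 0 < π0) (hπ1 : 0 < π1) (hγ : 0 < γ)
    (hP : 0 < P) (hPlam : P < lam)
    (ρhat : ℝ) (hρhat : ρhat = 1 / π1 + 1 / (γ * σ2))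
    (hass : lam * ρhat < π0 / π1)
    (g : ℝ → ℝ → ℝ → ℝ)
    (hg : ∀ q a δ, g q a δ =
      π0 * q - π1 / 2 * q ^ 2 - γ * σ2 / 2 * ((1 - exp (-a)) * q) ^ 2
        - δ * P - lam * ∫ ω, max (exp (-a) * q * X ω - δ) 0 ∂μ)
    (τ : ℝ) (hτ : τ = P * ES μ X (P / lam))
    (f : ℝ → ℝ → ℝ)
    (hf : ∀ q a, f q a =
      π0 * q - π1 / 2 * q ^ 2 - γ * σ2 / 2 * ((1 - exp (-a)) * q) ^ 2
        - τ * exp (-a) * q)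
    (qstar astar δstar : ℝ)
    (hqstar : qstar = π0 / π1 - P * ES μ X (P / lam) / π1)
    (hastar : exp (-astar) = (π0 / π1 - P * ES μ X (P / lam) * ρhat) / qstar)
    (hδstar : δstar = VaR μ X (P / lam) * (π0 / π1 - P * ES μ X (P / lam) * ρhat)) :
    -- the market objective is maximized at (q*, a*, δ*)
    (∀ q a δ : ℝ, g q a δ ≤ g qstar astar δstar) ∧
    -- optimal expected emissions
    exp (-astar) * qstar = π0 / π1 - P * ES μ X (P / lam) * ρhat ∧
    -- maximal expected market wealth
    g qstar astar δstar
      = π0 ^ 2 / (2 * π1)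
        - P * ES μ X (P / lam)
          * (π0 / π1 - P * ES μ X (P / lam) / 2 * ρhat) ∧
    -- equivalence with the tax problem at rate τ = P·ES_{P/λ}(X)
    (∀ q a : ℝ, f q a ≤ f qstar astar) ∧
    exp (-astar) * qstar = π0 / π1 - τ * ρhat ∧
    f qstar astar = π0 ^ 2 / (2 * π1) - τ * (π0 / π1 - τ / 2 * ρhat) := by
  have hlam : 0 < lam := lt_trans hP hPlam
  set ε := P / lam with hε
  have hε0 : 0 < ε := div_pos hP hlam
  have hε1 : ε < 1 := (div_lt_one hlam).mpr hPlam
  obtain ⟨hkey, hkeyeq, hESnn, hESle, hESge⟩ := ES_facts μ X hXmeas hXint hXpos hcont hε0 hε1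
  set E := ES μ X ε with hE
  set v := VaR μ X ε with hv
  rw [← hτ] at hqstar hastar hδstar ⊢
  set K := γ * σ2 with hK
  set Y := π0 / π1 - τ * ρhat with hY
  -- basic positivity facts
  have hτnn : 0 ≤ τ := by rw [hτ]; exact mul_nonneg hP.le hESnn
  have hτP : P ≤ τ := by
    have hE1 : (1:ℝ) ≤ ES μ X ε := by rw [← hEX]; exact hESge
    have := mul_le_mul_of_nonneg_left hE1 hP.le
    rw [hτ]; linarith
  have hτlam : τ ≤ lam := by
    have h1 : ε * E ≤ 1 := by rw [← hEX]; exact hESle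
    have h2 : lam * (ε * E) ≤ lam * 1 := mul_le_mul_of_nonneg_left h1 hlam.le
    have e1 : lam * (ε * E) = P * E := by rw [hε]; field_simp
    rw [hτ]; linarith
  have hσ2ge : (1:ℝ) ≤ σ2 := by
    have hmono : ∀ ω, 2 * X ω - 1 ≤ X ω ^ 2 := fun ω => by nlinarith [sq_nonneg (X ω - 1)]
    have h1 : ∫ ω, (2 * X ω - 1) ∂μ ≤ ∫ ω, X ω ^ 2 ∂μ :=
      integral_mono ((hXint.const_mul 2).sub (integrable_const 1)) hX2int hmono
    have h2 : ∫ ω, (2 * X ω - 1) ∂μ = 1 := by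
      rw [integral_sub (hXint.const_mul 2) (integrable_const 1), integral_const_mul _ _, hEX,
        integral_const, measureReal_def, measure_univ, ENNReal.toReal_one, smul_eq_mul]
      ring
    rw [hσ2]; linarith
  have hσ2pos : 0 < σ2 := lt_of_lt_of_le one_pos hσ2ge
  have hKpos : 0 < K := mul_pos hγ hσ2pos
  have hρpos : 0 < ρhat := by rw [hρhat]; positivity
  have hρge : 1 / π1 ≤ ρhat := by
    rw [hρhat]
    have : 0 < 1 / K := by positivity
    linarith
  have hτρ : τ * ρhat < π0 / π1 :=
    lt_of_le_of_lt (mul_le_mul_of_nonneg_right hτlam hρpos.le) hass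
  have hτπ0 : τ < π0 := by
    have h1 : τ * (1 / π1) ≤ τ * ρhat := mul_le_mul_of_nonneg_left hρge hτnn
    have h2 := mul_lt_mul_of_pos_right (lt_of_le_of_lt h1 hτρ) hπ1
    have e1 : τ * (1 / π1) * π1 = τ := by field_simp
    have e2 : π0 / π1 * π1 = π0 := div_mul_cancel₀ π0 (ne_of_gt hπ1)
    linarith
  have hYpos : 0 < Y := by rw [hY]; linarith
  have hqτ : qstar = (π0 - τ) / π1 := by rw [hqstar]; ring
  have hqpos : 0 < qstar := by rw [hqτ]; exact div_pos (by linarith) hπ1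
  have hexp : exp (-astar) * qstar = Y := by
    rw [hastar, div_mul_cancel₀ _ (ne_of_gt hqpos)]
  have hsstar : (1 - exp (-astar)) * qstar = τ / K := by
    have h1 : (1 - exp (-astar)) * qstar = qstar - exp (-astar) * qstar := by ring
    rw [h1, hexp, hqτ, hY, hρhat]
    field_simp
    ring
  -- integrability and scaling of the penalty term
  have hintY : ∀ (Y' δ : ℝ), Integrable (fun ω => max (Y' * X ω - δ) 0) μ :=
    fun Y' δ => ((hXint.const_mul Y').sub (integrable_const δ)).pos_part
  have hscale : ∀ (Y' c : ℝ), 0 < Y' → (∫ ω, max (Y' * X ω - Y' * c) 0 ∂μ)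
      = Y' * ∫ ω, max (X ω - c) 0 ∂μ := by
    intro Y' c hY'
    rw [← integral_const_mul _ _]
    refine integral_congr_ae (ae_of_all _ fun ω => ?_)
    show max (Y' * X ω - Y' * c) 0 = Y' * max (X ω - c) 0
    rw [mul_max_of_nonneg _ _ hY'.le, mul_zero, mul_sub]
  -- the key inequality : the market penalty dominates the tax cost
  have keyY : ∀ (Y' δ : ℝ), τ * Y' ≤ δ * P + lam * ∫ ω, max (Y' * X ω - δ) 0 ∂μ := by
    intro Y' δ
    rcases lt_or_ge 0 Y' with hY' | hY'
    · have h1 := hkey (δ / Y')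
      have h2 : (∫ ω, max (Y' * X ω - δ) 0 ∂μ) = Y' * ∫ ω, max (X ω - δ / Y') 0 ∂μ := by
        rw [← hscale Y' (δ / Y') hY', mul_div_cancel₀ _ (ne_of_gt hY')]
      have h3 := mul_le_mul_of_nonneg_left h1 (show (0:ℝ) ≤ lam * Y' by positivity)
      have hδc : δ / Y' * Y' = δ := div_mul_cancel₀ δ (ne_of_gt hY')
      have hP' : P = ε * lam := by rw [hε, div_mul_cancel₀ _ (ne_of_gt hlam)]
      calc τ * Y' = lam * Y' * (ε * E) := by rw [hτ, hP']; ring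
        _ ≤ lam * Y' * (δ / Y' * ε + ∫ ω, max (X ω - δ / Y') 0 ∂μ) := h3
        _ = δ * P + lam * (Y' * ∫ ω, max (X ω - δ / Y') 0 ∂μ) := by
            rw [hP']
            field_simp
        _ = δ * P + lam * ∫ ω, max (Y' * X ω - δ) 0 ∂μ := by rw [h2]
    · have h0 : 0 ≤ ∫ ω, max (Y' * X ω - δ) 0 ∂μ := integral_nonneg fun ω => le_max_right _ _
      have h1 : Y' * 1 - δ ≤ ∫ ω, max (Y' * X ω - δ) 0 ∂μ := by
        have h := integral_mono (f := fun ω => Y' * X ω - δ)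
          (g := fun ω => max (Y' * X ω - δ) 0)
          ((hXint.const_mul Y').sub (integrable_const δ)) (hintY Y' δ)
          (fun ω => le_max_left _ _)
        rwa [integral_sub (hXint.const_mul Y') (integrable_const δ), integral_const_mul _ _, hEX,
          integral_const, measureReal_def, measure_univ, ENNReal.toReal_one, smul_eq_mul, one_mul] at h
      rw [mul_one] at h1
      rcases le_or_gt 0 δ with hδ | hδ
      · linarith [mul_nonneg hδ hP.le, mul_nonneg hlam.le h0,
          mul_nonneg hτnn (neg_nonneg.mpr hY')]
      · have f2 : 0 ≤ (τ - P) * (-Y') :=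
          mul_nonneg (sub_nonneg.mpr hτP) (neg_nonneg.mpr hY')
        rcases le_or_gt δ Y' with hd | hd
        · have h2 := mul_le_mul_of_nonneg_left h1 hlam.le
          have f1 : 0 ≤ (Y' - δ) * (lam - P) :=
            mul_nonneg (sub_nonneg.mpr hd) (sub_nonneg.mpr hPlam.le)
          linarith [h2, f1, f2]
        · have f3 : 0 ≤ (δ - Y') * P := mul_nonneg (sub_nonneg.mpr hd.le) hP.le
          linarith [mul_nonneg hlam.le h0, f3, f2]
  -- equality at the optimum
  have hδY : δstar = v * Y := by rw [hδstar, hY]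
  have hcost : δstar * P + lam * ∫ ω, max (Y * X ω - δstar) 0 ∂μ = τ * Y := by
    have h2 : (∫ ω, max (Y * X ω - δstar) 0 ∂μ) = Y * ∫ ω, max (X ω - v) 0 ∂μ := by
      rw [hδY, show v * Y = Y * v from mul_comm _ _, hscale Y v hYpos]
    have hP' : P = ε * lam := by rw [hε, div_mul_cancel₀ _ (ne_of_gt hlam)]
    rw [h2, hδY, hτ, hP']
    linear_combination (lam * Y) * hkeyeq
  -- comparison of the two objectives
  have hgf : ∀ q a δ, g q a δ ≤ f q a := by
    intro q a δ
    rw [hg, hf]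
    have hassoc : τ * exp (-a) * q = τ * (exp (-a) * q) := by ring
    linarith [keyY (exp (-a) * q) δ, hassoc]
  have geqf : g qstar astar δstar = f qstar astar := by
    rw [hg, hf, hexp, mul_assoc τ, hexp]
    rw [← hcost]
    ring
  -- tax problem optimality
  have hq1 : π1 * qstar = π0 - τ := by rw [hqτ]; field_simp
  have taxmax : ∀ q a, f q a ≤ f qstar astar := by
    intro q a
    rw [hf, hf]
    have hπ0' : π0 = π1 * qstar + τ := by linarith
    have hτ'' : τ = K * ((1 - exp (-astar)) * qstar) := by
      rw [hsstar, mul_div_cancel₀ _ (ne_of_gt hKpos)]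
    have h1 : 0 ≤ π1 / 2 * (q - qstar) ^ 2 :=
      mul_nonneg (by linarith) (sq_nonneg _)
    have h2 : 0 ≤ K / 2 * ((1 - exp (-a)) * q - (1 - exp (-astar)) * qstar) ^ 2 :=
      mul_nonneg (by linarith) (sq_nonneg _)
    have hident : (π0 * qstar - π1 / 2 * qstar ^ 2
          - K / 2 * ((1 - exp (-astar)) * qstar) ^ 2 - τ * exp (-astar) * qstar)
        - (π0 * q - π1 / 2 * q ^ 2 - K / 2 * ((1 - exp (-a)) * q) ^ 2 - τ * exp (-a) * q)
        = π1 / 2 * (q - qstar) ^ 2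
          + K / 2 * ((1 - exp (-a)) * q - (1 - exp (-astar)) * qstar) ^ 2 := by
      rw [hπ0', hτ'']
      ring
    linarith [h1, h2, hident]
  have htax_val : f qstar astar = π0 ^ 2 / (2 * π1) - τ * (π0 / π1 - τ / 2 * ρhat) := by
    rw [hf, hsstar, mul_assoc τ, hexp, hqτ, hY, hρhat]
    field_simp
    ring
  refine ⟨?_, hexp, geqf.trans htax_val, taxmax, hexp, htax_val⟩
  intro q a δ
  exact le_trans (hgf q a δ) (le_trans (taxmax q a) (le_of_eq geqf.symm))
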